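/- If (A, ι) is a 𝒦-algebra, then the multiplier algebra of the relative commutant is M(C(A, ι)) = {a ∈ M(A) : ι(k)a = aι(k) for all k ∈ 𝒦}, where M(C(A, ι)) is identified with a subalgebra of M(A) via the nondegenerate inclusion C(A, ι) ⊂ M(A). -/

import Mathlib

open scoped MultiplierAlgebra
open Filter Topology

set_option synthInstance.maxHeartbeats 1000000
set_option maxHeartbeats 2000000

noncomputable section

/-! ## Framework

`𝓜(ℂ, A)` is the multiplier algebra `M(A)` of a (non-unital) C⋆-algebra `A`
(Mathlib's `DoubleCentralizer`), and `(a : 𝓜(ℂ, A))` is the canonical image of `a : A`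
in it. -/

/-- A system of matrix units `{u i j}` (indexed by `ℕ`) in a non-unital C⋆-algebra `K`,
whose linear span is dense.  A C⋆-algebra carrying such a system is precisely (i.e., is
⋆-isomorphic to) the C⋆-algebra `𝒦` of compact operators on a separable
infinite-dimensional Hilbert space. -/
structure MatrixUnits (K : Type*) [NonUnitalCStarAlgebra K] where
  u : ℕ → ℕ → K
  u_ne_zero : ∀ i j, u i j ≠ 0
  u_mul : ∀ i j k l, u i j * u k l = if j = k then u i l else 0
  star_u : ∀ i j, star (u i j) = u j i
  dense_span : Dense (Submodule.span ℂ (Set.range fun p : ℕ × ℕ => u p.1 p.2) : Set K)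

/-- `K` is (a copy of) the C⋆-algebra `𝒦` of compact operators on a separable
infinite-dimensional Hilbert space. -/
def IsCompactOperatorsAlgebra (K : Type*) [NonUnitalCStarAlgebra K] : Prop :=
  Nonempty (MatrixUnits K)

/-- A homomorphism `φ : A → M(B)` is *nondegenerate* if `φ(A)·B` is dense in `B`. -/
def Nondegenerate {A B : Type*} [NonUnitalCStarAlgebra A] [NonUnitalCStarAlgebra B]
    (φ : A →⋆ₙₐ[ℂ] 𝓜(ℂ, B)) : Prop :=
  ∀ b : B, (b : 𝓜(ℂ, B)) ∈
    closure (Submodule.span ℂ {x : 𝓜(ℂ, B) | ∃ (a : A) (c : B), x = φ a * c} : Set 𝓜(ℂ, B))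

/-- The `A`-relative commutant `C(A, ι) = {a ∈ M(A) : ι(k)·a = a·ι(k) ∈ A for all k ∈ K}`
of a `K`-algebra `(A, ι)`. -/
def relComm {K A : Type*} [NonUnitalCStarAlgebra K] [NonUnitalCStarAlgebra A]
    (ι : K →⋆ₙₐ[ℂ] 𝓜(ℂ, A)) : Set 𝓜(ℂ, A) :=
  {a | ∀ k : K, ι k * a = a * ι k ∧ a * ι k ∈ Set.range ((↑) : A → 𝓜(ℂ, A))}

namespace Aux

section Basics
variable {A : Type*} [NonUnitalCStarAlgebra A]


lemma eq_zero_of_forall_mul_right {z : A} (h : ∀ y : A, z * y = 0) : z = 0 := by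
  have h1 : ‖z * star z‖ = 0 := by simp [h]
  rw [CStarRing.norm_self_mul_star] at h1
  simpa using mul_self_eq_zero.mp h1

lemma eq_zero_of_forall_mul_left {z : A} (h : ∀ y : A, y * z = 0) : z = 0 := by
  have h1 : ‖star z * z‖ = 0 := by simp [h]
  rw [CStarRing.norm_star_mul_self] at h1
  simpa using mul_self_eq_zero.mp h1

lemma coe_injective : Function.Injective ((↑) : A → 𝓜(ℂ, A)) := by
  intro a b hab
  have h : ∀ x : A, a * x = b * x := fun x => by
    have := congrArg (fun m : 𝓜(ℂ, A) => m.fst x) hab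
    simpa using this
  have h2 : ∀ x : A, (a - b) * x = 0 := fun x => by rw [sub_mul, h x, sub_self]
  exact sub_eq_zero.mp (eq_zero_of_forall_mul_right h2)

lemma norm_coe (a : A) : ‖(a : 𝓜(ℂ, A))‖ = ‖a‖ := by
  rw [← DoubleCentralizer.norm_fst, DoubleCentralizer.coe_fst]
  refine le_antisymm (ContinuousLinearMap.opNorm_le_bound _ (norm_nonneg a)
    fun x => (norm_mul_le a x)) ?_
  rcases eq_or_ne a 0 with rfl | ha
  · simp
  · have h1 : ‖a‖ * ‖a‖ = ‖a * star a‖ := (CStarRing.norm_self_mul_star).symm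
    have h2 : ‖a * star a‖ ≤ ‖ContinuousLinearMap.mul ℂ A a‖ * ‖star a‖ := by
      simpa using (ContinuousLinearMap.mul ℂ A a).le_opNorm (star a)
    rw [norm_star] at h2
    have := le_of_mul_le_mul_right (h1 ▸ h2) (norm_pos_iff.mpr ha)
    exact this

lemma isometry_coe : Isometry ((↑) : A → 𝓜(ℂ, A)) :=
  AddMonoidHomClass.isometry_of_norm
    (DoubleCentralizer.coeHom (𝕜 := ℂ) (A := A)) norm_coe

lemma continuous_coe : Continuous ((↑) : A → 𝓜(ℂ, A)) := isometry_coe.continuous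

lemma fst_mul (m : 𝓜(ℂ, A)) (b x : A) : m.fst (b * x) = m.fst b * x := by
  have h : ∀ y : A, y * (m.fst (b * x) - m.fst b * x) = 0 := by
    intro y
    have c1 := m.central y (b * x)
    have c2 := m.central y b
    have : y * m.fst (b * x) = y * (m.fst b * x) := by
      rw [← c1, ← mul_assoc, c2, mul_assoc]
    rw [mul_sub, this, sub_self]
  exact sub_eq_zero.mp (eq_zero_of_forall_mul_left h)

lemma snd_mul (m : 𝓜(ℂ, A)) (b x : A) : m.snd (x * b) = x * m.snd b := by
  have h : ∀ y : A, (m.snd (x * b) - x * m.snd b) * y = 0 := by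
    intro y
    have c1 := m.central (x * b) y
    have c2 := m.central b y
    have : m.snd (x * b) * y = (x * m.snd b) * y := by
      rw [c1, mul_assoc, ← c2, mul_assoc]
    rw [sub_mul, this, sub_self]
  exact sub_eq_zero.mp (eq_zero_of_forall_mul_right h)

lemma mul_coe (m : 𝓜(ℂ, A)) (b : A) : m * (b : 𝓜(ℂ, A)) = ((m.fst b : A) : 𝓜(ℂ, A)) := by
  refine DoubleCentralizer.ext _ _ _ _ (Prod.ext ?_ ?_)
  · ext x
    exact fst_mul m b x |>.symm ▸ rfl
  · ext x
    show m.snd x * b = x * m.fst b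
    exact m.central x b

lemma coe_mul' (m : 𝓜(ℂ, A)) (b : A) : (b : 𝓜(ℂ, A)) * m = ((m.snd b : A) : 𝓜(ℂ, A)) := by
  refine DoubleCentralizer.ext _ _ _ _ (Prod.ext ?_ ?_)
  · ext x
    show b * m.fst x = m.snd b * x
    exact (m.central b x).symm
  · ext x
    show m.snd (x * b) = x * m.snd b
    exact snd_mul m b x

/-- Two multipliers agreeing after right multiplication by every element of `A` are equal. -/
lemma ext_right {m m' : 𝓜(ℂ, A)} (h : ∀ x : A, m * (x : 𝓜(ℂ, A)) = m' * x) : m = m' := by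
  have hfst : ∀ x : A, m.fst x = m'.fst x := fun x =>
    coe_injective (by rw [← mul_coe, ← mul_coe, h x])
  refine DoubleCentralizer.ext _ _ _ _ (Prod.ext (by ext x; exact hfst x) ?_)
  ext x
  refine sub_eq_zero.mp (eq_zero_of_forall_mul_right fun y => ?_)
  show (m.snd x - m'.snd x) * y = 0
  rw [sub_mul, m.central, m'.central, hfst, sub_self]

lemma eq_zero_of_forall_coe {m : 𝓜(ℂ, A)} (h : ∀ x : A, m * (x : 𝓜(ℂ, A)) = 0) : m = 0 :=
  ext_right fun x => by rw [h x, zero_mul]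


lemma coe_sum {β : Type*} (s : Finset β) (f : β → A) :
    ((∑ j ∈ s, f j : A) : 𝓜(ℂ, A)) = ∑ j ∈ s, ((f j : A) : 𝓜(ℂ, A)) :=
  map_sum (DoubleCentralizer.coeHom (𝕜 := ℂ) (A := A)) f s

lemma coe_zero' : ((0 : A) : 𝓜(ℂ, A)) = 0 :=
  map_zero (DoubleCentralizer.coeHom (𝕜 := ℂ) (A := A))

lemma coe_add' (x y : A) : ((x + y : A) : 𝓜(ℂ, A)) = (x : 𝓜(ℂ, A)) + (y : 𝓜(ℂ, A)) :=
  map_add (DoubleCentralizer.coeHom (𝕜 := ℂ) (A := A)) x y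

lemma coe_smul' (c : ℂ) (x : A) : ((c • x : A) : 𝓜(ℂ, A)) = c • (x : 𝓜(ℂ, A)) :=
  map_smul (DoubleCentralizer.coeHom (𝕜 := ℂ) (A := A)) c x

lemma coe_mul_coe (x y : A) : ((x * y : A) : 𝓜(ℂ, A)) = (x : 𝓜(ℂ, A)) * (y : 𝓜(ℂ, A)) :=
  map_mul (DoubleCentralizer.coeHom (𝕜 := ℂ) (A := A)) x y

end Basics


lemma tendsto_mul_span {M : Type*} [NonUnitalNormedRing M] [NormedSpace ℂ M]
    [SMulCommClass ℂ M M] (g : ℕ → M) (s : Set M)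
    (hgen : ∀ m ∈ s, Tendsto (fun n => g n * m) atTop (𝓝 m)) :
    ∀ m ∈ Submodule.span ℂ s, Tendsto (fun n => g n * m) atTop (𝓝 m) := by
  intro m hm
  induction hm using Submodule.span_induction with
  | mem x hx => exact hgen x hx
  | zero => simpa using (tendsto_const_nhds : Tendsto (fun _ : ℕ => (0 : M)) atTop _)
  | add x y _ _ hx hy => simpa [mul_add] using hx.add hy
  | smul c x _ hx => simpa [mul_smul_comm] using hx.const_smul c

lemma tendsto_mul_of_dense {M : Type*} [NonUnitalNormedRing M] {g : ℕ → M}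
    (hg : ∀ n, ‖g n‖ ≤ 1) {S : Set M}
    (hS : ∀ s ∈ S, Tendsto (fun n => g n * s) atTop (𝓝 s)) {x : M} (hx : x ∈ closure S) :
    Tendsto (fun n => g n * x) atTop (𝓝 x) := by
  rw [Metric.tendsto_atTop]
  intro ε hε
  obtain ⟨s, hsS, hs⟩ := Metric.mem_closure_iff.mp hx (ε / 3) (by linarith)
  obtain ⟨N, hN⟩ := Metric.tendsto_atTop.mp (hS s hsS) (ε / 3) (by linarith)
  refine ⟨N, fun n hn => ?_⟩
  have h1 : dist (g n * x) (g n * s) ≤ ε / 3 := by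
    rw [dist_eq_norm, ← mul_sub]
    calc ‖g n * (x - s)‖ ≤ ‖g n‖ * ‖x - s‖ := norm_mul_le _ _
    _ ≤ 1 * ‖x - s‖ := mul_le_mul_of_nonneg_right (hg n) (norm_nonneg _)
    _ ≤ ε / 3 := by rw [one_mul, ← dist_eq_norm]; exact le_of_lt hs
  calc dist (g n * x) x ≤ dist (g n * x) (g n * s) + dist (g n * s) s + dist s x :=
        dist_triangle4 _ _ _ _
  _ < ε / 3 + ε / 3 + ε / 3 := by
      refine add_lt_add_of_lt_of_lt (add_lt_add_of_le_of_lt h1 (hN n hn)) ?_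
      rwa [dist_comm]
  _ = ε := by ring

variable {K : Type*} [NonUnitalCStarAlgebra K] (mu : MatrixUnits K)

lemma norm_u (i j : ℕ) : ‖mu.u i j‖ = 1 := by
  have hdiag : ∀ l, ‖mu.u l l‖ = 1 := by
    intro l
    have h1 : star (mu.u l l) * mu.u l l = mu.u l l := by
      rw [mu.star_u, mu.u_mul]; simp
    have h2 : ‖mu.u l l‖ * ‖mu.u l l‖ = ‖mu.u l l‖ := by
      rw [← CStarRing.norm_star_mul_self, h1]
    have h3 : ‖mu.u l l‖ ≠ 0 := norm_ne_zero_iff.mpr (mu.u_ne_zero l l)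
    field_simp at h2
    tauto
  have h1 : star (mu.u i j) * mu.u i j = mu.u j j := by
    rw [mu.star_u, mu.u_mul]; simp
  have h2 : ‖mu.u i j‖ * ‖mu.u i j‖ = 1 := by
    rw [← CStarRing.norm_star_mul_self, h1, hdiag]
  nlinarith [norm_nonneg (mu.u i j)]

def pn (n : ℕ) : K := ∑ j ∈ Finset.range (n + 1), mu.u j j

lemma pn_mul_u (n i j : ℕ) : pn mu n * mu.u i j = if i ≤ n then mu.u i j else 0 := by
  rw [pn, Finset.sum_mul]
  have : ∀ l ∈ Finset.range (n + 1), mu.u l l * mu.u i j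
      = if l = i then mu.u l j else 0 := fun l _ => mu.u_mul l l i j
  rw [Finset.sum_congr rfl this]
  by_cases h : i ≤ n
  · rw [Finset.sum_ite_eq' (Finset.range (n+1)) i (fun l => mu.u l j)]
    simp [Nat.lt_succ_iff, h]
  · rw [Finset.sum_ite_eq' (Finset.range (n+1)) i (fun l => mu.u l j)]
    simp [Nat.lt_succ_iff, h]

lemma u_mul_pn (n i j : ℕ) : mu.u i j * pn mu n = if j ≤ n then mu.u i j else 0 := by
  rw [pn, Finset.mul_sum]
  have : ∀ l ∈ Finset.range (n + 1), mu.u i j * mu.u l l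
      = if j = l then mu.u i l else 0 := fun l _ => mu.u_mul i j l l
  rw [Finset.sum_congr rfl this]
  rw [Finset.sum_ite_eq (Finset.range (n+1)) j (fun l => mu.u i l)]
  by_cases h : j ≤ n <;> simp [Nat.lt_succ_iff, h]

lemma star_pn (n : ℕ) : star (pn mu n) = pn mu n := by
  rw [pn, star_sum]
  exact Finset.sum_congr rfl fun l _ => mu.star_u l l

lemma pn_sq (n : ℕ) : pn mu n * pn mu n = pn mu n := by
  have h1 : pn mu n * pn mu n = ∑ l ∈ Finset.range (n + 1), pn mu n * mu.u l l :=
    Finset.mul_sum _ _ _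
  rw [h1]
  have h2 : ∀ l ∈ Finset.range (n + 1), pn mu n * mu.u l l = mu.u l l := by
    intro l hl
    rw [pn_mul_u]
    simp [Nat.lt_succ_iff.mp (Finset.mem_range.mp hl)]
  rw [Finset.sum_congr rfl h2]
  rfl

lemma norm_pn_le (n : ℕ) : ‖pn mu n‖ ≤ 1 := by
  have h2 : ‖pn mu n‖ * ‖pn mu n‖ = ‖pn mu n‖ := by
    rw [← CStarRing.norm_star_mul_self, star_pn, pn_sq]
  nlinarith [norm_nonneg (pn mu n)]

lemma tendsto_pn_mul (k : K) : Tendsto (fun n => pn mu n * k) atTop (𝓝 k) := by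
  refine tendsto_mul_of_dense (norm_pn_le mu) (S := (Submodule.span ℂ
    (Set.range fun p : ℕ × ℕ => mu.u p.1 p.2) : Submodule ℂ K)) ?_ ?_
  · refine tendsto_mul_span _ _ ?_
    rintro m ⟨⟨i, j⟩, rfl⟩
    refine Tendsto.congr' ?_ tendsto_const_nhds
    filter_upwards [eventually_ge_atTop i] with n hn
    simp [pn_mul_u, hn]
  · rw [mu.dense_span.closure_eq]; trivial


variable {A : Type*} [NonUnitalCStarAlgebra A] (ι : K →⋆ₙₐ[ℂ] 𝓜(ℂ, A))

lemma iota_cont : Continuous ι :=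
  AddMonoidHomClass.continuous_of_bound ι 1
    (fun k => by simpa using NonUnitalStarAlgHom.norm_apply_le ι k)

lemma iota_norm_le (k : K) : ‖ι k‖ ≤ ‖k‖ := NonUnitalStarAlgHom.norm_apply_le ι k

lemma coe_star (x : A) : ((star x : A) : 𝓜(ℂ, A)) = star (x : 𝓜(ℂ, A)) :=
  map_star (DoubleCentralizer.coeHom (𝕜 := ℂ) (A := A)) x

lemma e_mul (i j k l : ℕ) :
    ι (mu.u i j) * ι (mu.u k l) = if j = k then ι (mu.u i l) else 0 := by
  rw [← map_mul, mu.u_mul]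
  split <;> simp


lemma tendsto_P_coe (hι : Nondegenerate ι) (x : A) :
    Tendsto (fun n => ι (pn mu n) * (x : 𝓜(ℂ, A))) atTop (𝓝 (x : 𝓜(ℂ, A))) := by
  refine tendsto_mul_of_dense
    (fun n => (iota_norm_le ι _).trans (norm_pn_le mu n)) ?_ (hι x)
  refine tendsto_mul_span _ _ ?_
  rintro m ⟨a, c, rfl⟩
  have h : ∀ n, ι (pn mu n) * (ι a * (c : 𝓜(ℂ, A))) = ι (pn mu n * a) * c := by
    intro n; rw [map_mul, mul_assoc]
  have h2 : Tendsto (fun n => ι (pn mu n * a)) atTop (𝓝 (ι a)) :=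
    ((iota_cont ι).tendsto a).comp (tendsto_pn_mul mu a)
  exact Tendsto.congr (fun n => (h n).symm) (h2.mul_const _)

lemma tendsto_coe_P (hι : Nondegenerate ι) (x : A) :
    Tendsto (fun n => (x : 𝓜(ℂ, A)) * ι (pn mu n)) atTop (𝓝 (x : 𝓜(ℂ, A))) := by
  have h1 := tendsto_P_coe mu ι hι (star x)
  have h2 := (continuous_star.tendsto _).comp h1
  have h3 : ∀ n, star (ι (pn mu n) * ((star x : A) : 𝓜(ℂ, A)))
      = (x : 𝓜(ℂ, A)) * ι (pn mu n) := by
    intro n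
    rw [star_mul, ← coe_star, star_star, ← map_star, star_pn]
  have h4 : star ((star x : A) : 𝓜(ℂ, A)) = (x : 𝓜(ℂ, A)) := by
    rw [← coe_star, star_star]
  have h5 := Tendsto.congr h3 h2
  rwa [h4] at h5


section Construction

/-- Shorthand: the element of `A` realizing `ι (u p 0) * y * ι (u 0 q)`. -/
def gel (p q : ℕ) (y : A) : A := (ι (mu.u p 0)).fst ((ι (mu.u 0 q)).snd y)

lemma coe_gel (p q : ℕ) (y : A) :
    ((gel mu ι p q y : A) : 𝓜(ℂ, A)) = ι (mu.u p 0) * (y : 𝓜(ℂ, A)) * ι (mu.u 0 q) := by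
  rw [gel, ← mul_coe, ← coe_mul', mul_assoc]

def cseq (y : A) (n : ℕ) : A := ∑ j ∈ Finset.range (n + 1), gel mu ι j j y

lemma coe_cseq (y : A) (n : ℕ) :
    ((cseq mu ι y n : A) : 𝓜(ℂ, A))
      = ∑ j ∈ Finset.range (n + 1), ι (mu.u j 0) * (y : 𝓜(ℂ, A)) * ι (mu.u 0 j) := by
  rw [cseq, coe_sum]
  exact Finset.sum_congr rfl fun j _ => coe_gel mu ι j j y

/-- `y` is compressed by the projection `ι (u 0 0)`. -/
def IsComp (y : A) : Prop :=
  (y : 𝓜(ℂ, A)) = ι (mu.u 0 0) * (y : 𝓜(ℂ, A)) * ι (mu.u 0 0)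

variable {mu ι}

lemma IsComp.left {y : A} (hy : IsComp mu ι y) :
    ι (mu.u 0 0) * (y : 𝓜(ℂ, A)) = (y : 𝓜(ℂ, A)) := by
  have hy0 : (y : 𝓜(ℂ, A)) = ι (mu.u 0 0) * (y : 𝓜(ℂ, A)) * ι (mu.u 0 0) := hy
  conv_lhs => rw [hy0]
  rw [← mul_assoc, ← mul_assoc, e_mul, if_pos rfl]
  exact hy0.symm

lemma IsComp.right {y : A} (hy : IsComp mu ι y) :
    (y : 𝓜(ℂ, A)) * ι (mu.u 0 0) = (y : 𝓜(ℂ, A)) := by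
  have hy0 : (y : 𝓜(ℂ, A)) = ι (mu.u 0 0) * (y : 𝓜(ℂ, A)) * ι (mu.u 0 0) := hy
  conv_lhs => rw [hy0]
  rw [mul_assoc, e_mul, if_pos rfl]
  exact hy0.symm

lemma IsComp.star_mem {y : A} (hy : IsComp mu ι y) : IsComp mu ι (star y) := by
  have hy0 : (y : 𝓜(ℂ, A)) = ι (mu.u 0 0) * (y : 𝓜(ℂ, A)) * ι (mu.u 0 0) := hy
  show ((star y : A) : 𝓜(ℂ, A)) = ι (mu.u 0 0) * ((star y : A) : 𝓜(ℂ, A)) * ι (mu.u 0 0)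
  rw [coe_star]
  conv_lhs => rw [hy0]
  rw [star_mul, star_mul]
  simp only [← map_star, mu.star_u]
  rw [← mul_assoc]

lemma IsComp.mul {y y' : A} (hy : IsComp mu ι y) (hy' : IsComp mu ι y') :
    IsComp mu ι (y * y') := by
  have hcoe : ((y * y' : A) : 𝓜(ℂ, A)) = (y : 𝓜(ℂ, A)) * y' :=
    map_mul (DoubleCentralizer.coeHom (𝕜 := ℂ) (A := A)) y y'
  show ((y * y' : A) : 𝓜(ℂ, A)) = ι (mu.u 0 0) * ((y * y' : A) : 𝓜(ℂ, A)) * ι (mu.u 0 0)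
  rw [hcoe]
  conv_lhs => rw [← hy.left, ← hy'.right]
  simp only [mul_assoc]

variable (mu ι)

lemma cseq_mul_e (y : A) (n p q : ℕ) :
    ((cseq mu ι y n : A) : 𝓜(ℂ, A)) * ι (mu.u p q)
      = if p ≤ n then ι (mu.u p 0) * (y : 𝓜(ℂ, A)) * ι (mu.u 0 q) else 0 := by
  rw [coe_cseq, Finset.sum_mul]
  have h : ∀ j ∈ Finset.range (n + 1),
      ι (mu.u j 0) * (y : 𝓜(ℂ, A)) * ι (mu.u 0 j) * ι (mu.u p q)
        = if j = p then ι (mu.u j 0) * (y : 𝓜(ℂ, A)) * ι (mu.u 0 q) else 0 := by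
    intro j _
    rw [mul_assoc, e_mul]
    split <;> simp [mul_assoc]
  rw [Finset.sum_congr rfl h,
    Finset.sum_ite_eq' (Finset.range (n + 1)) p
      (fun j => ι (mu.u j 0) * (y : 𝓜(ℂ, A)) * ι (mu.u 0 q))]
  by_cases hpn : p ≤ n <;> simp [Nat.lt_succ_iff, hpn]

lemma e_mul_cseq (y : A) (n p q : ℕ) :
    ι (mu.u p q) * ((cseq mu ι y n : A) : 𝓜(ℂ, A))
      = if q ≤ n then ι (mu.u p 0) * (y : 𝓜(ℂ, A)) * ι (mu.u 0 q) else 0 := by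
  rw [coe_cseq, Finset.mul_sum]
  have h : ∀ j ∈ Finset.range (n + 1),
      ι (mu.u p q) * (ι (mu.u j 0) * (y : 𝓜(ℂ, A)) * ι (mu.u 0 j))
        = if q = j then ι (mu.u p 0) * (y : 𝓜(ℂ, A)) * ι (mu.u 0 j) else 0 := by
    intro j _
    rw [← mul_assoc, ← mul_assoc, e_mul]
    split <;> simp [mul_assoc]
  rw [Finset.sum_congr rfl h,
    Finset.sum_ite_eq (Finset.range (n + 1)) q
      (fun j => ι (mu.u p 0) * (y : 𝓜(ℂ, A)) * ι (mu.u 0 j))]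
  by_cases hqn : q ≤ n <;> simp [Nat.lt_succ_iff, hqn]

lemma cseq_mul_cseq {y y' : A} (hy : IsComp mu ι y) (hy' : IsComp mu ι y') (n : ℕ) :
    cseq mu ι y n * cseq mu ι y' n = cseq mu ι (y * y') n := by
  apply coe_injective
  rw [coe_mul_coe]
  calc ((cseq mu ι y n : A) : 𝓜(ℂ, A)) * ((cseq mu ι y' n : A) : 𝓜(ℂ, A))
      = ∑ j ∈ Finset.range (n + 1),
          ((cseq mu ι y n : A) : 𝓜(ℂ, A)) * (ι (mu.u j 0) * ((y' : A) : 𝓜(ℂ, A)) * ι (mu.u 0 j)) := by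
        rw [coe_cseq mu ι y' n, Finset.mul_sum]
    _ = ∑ j ∈ Finset.range (n + 1),
          ι (mu.u j 0) * (((y * y' : A) : A) : 𝓜(ℂ, A)) * ι (mu.u 0 j) := by
        refine Finset.sum_congr rfl fun j hj => ?_
        have hj' : j ≤ n := Nat.lt_succ_iff.mp (Finset.mem_range.mp hj)
        have h1 : ((cseq mu ι y n : A) : 𝓜(ℂ, A)) * (ι (mu.u j 0) * ((y' : A) : 𝓜(ℂ, A)) * ι (mu.u 0 j))
            = (((cseq mu ι y n : A) : 𝓜(ℂ, A)) * ι (mu.u j 0)) * (((y' : A) : 𝓜(ℂ, A)) * ι (mu.u 0 j)) := by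
          simp only [mul_assoc]
        rw [h1, cseq_mul_e, if_pos hj', coe_mul_coe]
        simp only [mul_assoc]
        rw [← mul_assoc (ι (mu.u 0 0)) _ _, hy'.left]
    _ = ((cseq mu ι (y * y') n : A) : 𝓜(ℂ, A)) := (coe_cseq _ _ _ _).symm

lemma star_cseq (y : A) (n : ℕ) : star (cseq mu ι y n) = cseq mu ι (star y) n := by
  apply coe_injective
  rw [coe_star, coe_cseq, coe_cseq, star_sum]
  refine Finset.sum_congr rfl fun j _ => ?_
  rw [star_mul, star_mul]
  simp only [← map_star, mu.star_u, ← coe_star]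
  rw [← mul_assoc]

lemma norm_cseq_le_linear (y : A) (n : ℕ) : ‖cseq mu ι y n‖ ≤ (n + 1 : ℝ) * ‖y‖ := by
  have h1 : ∀ j ∈ Finset.range (n + 1), ‖gel mu ι j j y‖ ≤ ‖y‖ := by
    intro j _
    rw [← norm_coe, coe_gel]
    calc ‖ι (mu.u j 0) * ((y : A) : 𝓜(ℂ, A)) * ι (mu.u 0 j)‖
        ≤ ‖ι (mu.u j 0) * ((y : A) : 𝓜(ℂ, A))‖ * ‖ι (mu.u 0 j)‖ := norm_mul_le _ _
      _ ≤ ‖ι (mu.u j 0)‖ * ‖((y : A) : 𝓜(ℂ, A))‖ * ‖ι (mu.u 0 j)‖ := by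
          have := norm_mul_le (ι (mu.u j 0)) ((y : A) : 𝓜(ℂ, A))
          exact mul_le_mul_of_nonneg_right this (norm_nonneg _)
      _ ≤ 1 * ‖y‖ * 1 := by
          rw [norm_coe]
          have ha : ‖ι (mu.u j 0)‖ ≤ 1 := by
            simpa [norm_u] using iota_norm_le ι (mu.u j 0)
          have hb : ‖ι (mu.u 0 j)‖ ≤ 1 := by
            simpa [norm_u] using iota_norm_le ι (mu.u 0 j)
          have h0 : (0:ℝ) ≤ ‖y‖ := norm_nonneg y
          exact mul_le_mul (mul_le_mul ha le_rfl h0 zero_le_one) hb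
            (norm_nonneg _) (by positivity)
      _ = ‖y‖ := by ring
  calc ‖cseq mu ι y n‖ ≤ ∑ j ∈ Finset.range (n + 1), ‖gel mu ι j j y‖ :=
        norm_sum_le _ _
    _ ≤ ∑ _j ∈ Finset.range (n + 1), ‖y‖ := Finset.sum_le_sum h1
    _ = (n + 1 : ℝ) * ‖y‖ := by
        rw [Finset.sum_const, Finset.card_range]
        push_cast
        ring

lemma norm_cseq_sq {y : A} (hy : IsComp mu ι y) (n : ℕ) :
    ‖cseq mu ι y n‖ ^ 2 = ‖cseq mu ι (star y * y) n‖ := by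
  rw [sq, ← CStarRing.norm_star_mul_self, star_cseq mu ι, cseq_mul_cseq mu ι hy.star_mem hy]

lemma norm_cseq_pow (k : ℕ) :
    ∀ y : A, IsComp mu ι y → ∀ n : ℕ,
      ‖cseq mu ι y n‖ ^ (2 ^ k) ≤ (n + 1 : ℝ) * ‖y‖ ^ (2 ^ k) := by
  induction k with
  | zero =>
    intro y _ n
    simpa using norm_cseq_le_linear mu ι y n
  | succ k ih =>
    intro y hy n
    have h2 : (2 : ℕ) ^ (k + 1) = 2 * 2 ^ k := by ring
    rw [h2, pow_mul, pow_mul, norm_cseq_sq mu ι hy]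
    calc ‖cseq mu ι (star y * y) n‖ ^ (2 ^ k)
        ≤ (n + 1 : ℝ) * ‖star y * y‖ ^ (2 ^ k) := ih _ (hy.star_mem.mul hy) n
      _ = (n + 1 : ℝ) * (‖y‖ ^ 2) ^ (2 ^ k) := by
          rw [CStarRing.norm_star_mul_self, sq]

lemma le_of_pow_two_pow_le {x r M : ℝ} (hx : 0 ≤ x) (hr : 0 ≤ r)
    (h : ∀ k : ℕ, x ^ (2 ^ k) ≤ M * r ^ (2 ^ k)) : x ≤ r := by
  by_contra hlt
  push_neg at hlt
  rcases eq_or_lt_of_le hr with hr0 | hr'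
  · have h0 := h 0
    simp [← hr0] at h0
    linarith
  · have ht : 1 < x / r := (one_lt_div hr').mpr hlt
    obtain ⟨m, hm⟩ := pow_unbounded_of_one_lt M ht
    have h1 : (x / r) ^ (2 ^ m) ≤ M := by
      have := h m
      rw [div_pow]
      rw [div_le_iff₀ (by positivity)]
      linarith
    have h2 : (x / r) ^ m ≤ (x / r) ^ (2 ^ m) :=
      pow_le_pow_right₀ ht.le (Nat.lt_two_pow_self (n := m)).le
    linarith

lemma norm_cseq_le {y : A} (hy : IsComp mu ι y) (n : ℕ) : ‖cseq mu ι y n‖ ≤ ‖y‖ :=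
  le_of_pow_two_pow_le (norm_nonneg _) (norm_nonneg _)
    (fun k => norm_cseq_pow mu ι k y hy n)

lemma iota_pn (m : ℕ) : ι (pn mu m) = ∑ q ∈ Finset.range (m + 1), ι (mu.u q q) := by
  rw [pn, map_sum]

lemma cseq_mul_pn (y : A) {n m : ℕ} (h : m ≤ n) :
    ((cseq mu ι y n : A) : 𝓜(ℂ, A)) * ι (pn mu m) = ((cseq mu ι y m : A) : 𝓜(ℂ, A)) := by
  rw [iota_pn, Finset.mul_sum]
  have h1 : ∀ q ∈ Finset.range (m + 1),
      ((cseq mu ι y n : A) : 𝓜(ℂ, A)) * ι (mu.u q q)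
        = ι (mu.u q 0) * ((y : A) : 𝓜(ℂ, A)) * ι (mu.u 0 q) := by
    intro q hq
    have hq' : q ≤ n := le_trans (Nat.lt_succ_iff.mp (Finset.mem_range.mp hq)) h
    rw [cseq_mul_e, if_pos hq']
  rw [Finset.sum_congr rfl h1, ← coe_cseq]

lemma pn_mul_cseq (y : A) {n m : ℕ} (h : m ≤ n) :
    ι (pn mu m) * ((cseq mu ι y n : A) : 𝓜(ℂ, A)) = ((cseq mu ι y m : A) : 𝓜(ℂ, A)) := by
  rw [iota_pn, Finset.sum_mul]
  have h1 : ∀ q ∈ Finset.range (m + 1),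
      ι (mu.u q q) * ((cseq mu ι y n : A) : 𝓜(ℂ, A))
        = ι (mu.u q 0) * ((y : A) : 𝓜(ℂ, A)) * ι (mu.u 0 q) := by
    intro q hq
    have hq' : q ≤ n := le_trans (Nat.lt_succ_iff.mp (Finset.mem_range.mp hq)) h
    rw [e_mul_cseq, if_pos hq']
  rw [Finset.sum_congr rfl h1, ← coe_cseq]

lemma coe_sub' (a b : A) : ((a - b : A) : 𝓜(ℂ, A)) = (a : 𝓜(ℂ, A)) - (b : 𝓜(ℂ, A)) :=
  map_sub (DoubleCentralizer.coeHom (𝕜 := ℂ) (A := A)) a b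

lemma cauchy_left (hι : Nondegenerate ι) {y : A} (hy : IsComp mu ι y) (x : A) :
    CauchySeq (fun n => cseq mu ι y n * x) := by
  apply cauchySeq_of_le_tendsto_0
    (b := fun N => 2 * ‖y‖ * ‖(x : 𝓜(ℂ, A)) - ι (pn mu N) * (x : 𝓜(ℂ, A))‖)
  · intro n m N hn hm
    rw [dist_eq_norm, ← norm_coe, coe_sub', coe_mul_coe, coe_mul_coe]
    have key : ((cseq mu ι y n : A) : 𝓜(ℂ, A)) * (x : 𝓜(ℂ, A))
        - ((cseq mu ι y m : A) : 𝓜(ℂ, A)) * (x : 𝓜(ℂ, A))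
        = (((cseq mu ι y n : A) : 𝓜(ℂ, A)) - ((cseq mu ι y m : A) : 𝓜(ℂ, A)))
            * ((x : 𝓜(ℂ, A)) - ι (pn mu N) * (x : 𝓜(ℂ, A))) := by
      have e1 : ((cseq mu ι y n : A) : 𝓜(ℂ, A)) * (ι (pn mu N) * (x : 𝓜(ℂ, A)))
          = ((cseq mu ι y N : A) : 𝓜(ℂ, A)) * (x : 𝓜(ℂ, A)) := by
        rw [← mul_assoc, cseq_mul_pn mu ι y hn]
      have e2 : ((cseq mu ι y m : A) : 𝓜(ℂ, A)) * (ι (pn mu N) * (x : 𝓜(ℂ, A)))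
          = ((cseq mu ι y N : A) : 𝓜(ℂ, A)) * (x : 𝓜(ℂ, A)) := by
        rw [← mul_assoc, cseq_mul_pn mu ι y hm]
      rw [sub_mul, mul_sub, mul_sub, e1, e2]
      abel
    rw [key]
    calc ‖(((cseq mu ι y n : A) : 𝓜(ℂ, A)) - ((cseq mu ι y m : A) : 𝓜(ℂ, A)))
            * ((x : 𝓜(ℂ, A)) - ι (pn mu N) * (x : 𝓜(ℂ, A)))‖
        ≤ ‖((cseq mu ι y n : A) : 𝓜(ℂ, A)) - ((cseq mu ι y m : A) : 𝓜(ℂ, A))‖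
            * ‖(x : 𝓜(ℂ, A)) - ι (pn mu N) * (x : 𝓜(ℂ, A))‖ := norm_mul_le _ _
      _ ≤ 2 * ‖y‖ * ‖(x : 𝓜(ℂ, A)) - ι (pn mu N) * (x : 𝓜(ℂ, A))‖ := by
          have hnorm : ‖((cseq mu ι y n : A) : 𝓜(ℂ, A)) - ((cseq mu ι y m : A) : 𝓜(ℂ, A))‖
              ≤ 2 * ‖y‖ := by
            calc ‖((cseq mu ι y n : A) : 𝓜(ℂ, A)) - ((cseq mu ι y m : A) : 𝓜(ℂ, A))‖
                ≤ ‖((cseq mu ι y n : A) : 𝓜(ℂ, A))‖ + ‖((cseq mu ι y m : A) : 𝓜(ℂ, A))‖ :=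
                  norm_sub_le _ _
              _ ≤ 2 * ‖y‖ := by
                  rw [norm_coe, norm_coe]
                  have := norm_cseq_le mu ι hy n
                  have := norm_cseq_le mu ι hy m
                  linarith
          exact mul_le_mul_of_nonneg_right hnorm (norm_nonneg _)
  · have h1 : Tendsto (fun N => (x : 𝓜(ℂ, A)) - ι (pn mu N) * (x : 𝓜(ℂ, A))) atTop (𝓝 0) := by
      have := tendsto_P_coe mu ι hι x
      have h0 := (tendsto_const_nhds : Tendsto (fun _ : ℕ => (x : 𝓜(ℂ, A))) atTop _).sub this
      rwa [sub_self] at h0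
    have h2 := h1.norm
    simp only [norm_zero] at h2
    simpa using h2.const_mul (2 * ‖y‖)

lemma cauchy_right (hι : Nondegenerate ι) {y : A} (hy : IsComp mu ι y) (x : A) :
    CauchySeq (fun n => x * cseq mu ι y n) := by
  apply cauchySeq_of_le_tendsto_0
    (b := fun N => 2 * ‖y‖ * ‖(x : 𝓜(ℂ, A)) - (x : 𝓜(ℂ, A)) * ι (pn mu N)‖)
  · intro n m N hn hm
    rw [dist_eq_norm, ← norm_coe, coe_sub', coe_mul_coe, coe_mul_coe]
    have key : (x : 𝓜(ℂ, A)) * ((cseq mu ι y n : A) : 𝓜(ℂ, A))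
        - (x : 𝓜(ℂ, A)) * ((cseq mu ι y m : A) : 𝓜(ℂ, A))
        = ((x : 𝓜(ℂ, A)) - (x : 𝓜(ℂ, A)) * ι (pn mu N))
            * (((cseq mu ι y n : A) : 𝓜(ℂ, A)) - ((cseq mu ι y m : A) : 𝓜(ℂ, A))) := by
      have e1 : (x : 𝓜(ℂ, A)) * ι (pn mu N) * ((cseq mu ι y n : A) : 𝓜(ℂ, A))
          = (x : 𝓜(ℂ, A)) * ((cseq mu ι y N : A) : 𝓜(ℂ, A)) := by
        rw [mul_assoc, pn_mul_cseq mu ι y hn]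
      have e2 : (x : 𝓜(ℂ, A)) * ι (pn mu N) * ((cseq mu ι y m : A) : 𝓜(ℂ, A))
          = (x : 𝓜(ℂ, A)) * ((cseq mu ι y N : A) : 𝓜(ℂ, A)) := by
        rw [mul_assoc, pn_mul_cseq mu ι y hm]
      rw [sub_mul, mul_sub, mul_sub, e1, e2]
      abel
    rw [key]
    calc ‖((x : 𝓜(ℂ, A)) - (x : 𝓜(ℂ, A)) * ι (pn mu N))
            * (((cseq mu ι y n : A) : 𝓜(ℂ, A)) - ((cseq mu ι y m : A) : 𝓜(ℂ, A)))‖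
        ≤ ‖(x : 𝓜(ℂ, A)) - (x : 𝓜(ℂ, A)) * ι (pn mu N)‖
            * ‖((cseq mu ι y n : A) : 𝓜(ℂ, A)) - ((cseq mu ι y m : A) : 𝓜(ℂ, A))‖ :=
          norm_mul_le _ _
      _ ≤ ‖(x : 𝓜(ℂ, A)) - (x : 𝓜(ℂ, A)) * ι (pn mu N)‖ * (2 * ‖y‖) := by
          have hnorm : ‖((cseq mu ι y n : A) : 𝓜(ℂ, A)) - ((cseq mu ι y m : A) : 𝓜(ℂ, A))‖
              ≤ 2 * ‖y‖ := by
            calc ‖((cseq mu ι y n : A) : 𝓜(ℂ, A)) - ((cseq mu ι y m : A) : 𝓜(ℂ, A))‖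
                ≤ ‖((cseq mu ι y n : A) : 𝓜(ℂ, A))‖ + ‖((cseq mu ι y m : A) : 𝓜(ℂ, A))‖ :=
                  norm_sub_le _ _
              _ ≤ 2 * ‖y‖ := by
                  rw [norm_coe, norm_coe]
                  have := norm_cseq_le mu ι hy n
                  have := norm_cseq_le mu ι hy m
                  linarith
          exact mul_le_mul_of_nonneg_left hnorm (norm_nonneg _)
      _ = 2 * ‖y‖ * ‖(x : 𝓜(ℂ, A)) - (x : 𝓜(ℂ, A)) * ι (pn mu N)‖ := by ring
  · have h1 : Tendsto (fun N => (x : 𝓜(ℂ, A)) - (x : 𝓜(ℂ, A)) * ι (pn mu N)) atTop (𝓝 0) := by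
      have := tendsto_coe_P mu ι hι x
      have h0 := (tendsto_const_nhds : Tendsto (fun _ : ℕ => (x : 𝓜(ℂ, A))) atTop _).sub this
      rwa [sub_self] at h0
    have h2 := h1.norm
    simp only [norm_zero] at h2
    simpa using h2.const_mul (2 * ‖y‖)

lemma exists_multiplier (hι : Nondegenerate ι) {y : A} (hy : IsComp mu ι y) :
    ∃ Cy : 𝓜(ℂ, A),
      (∀ k : K, ι k * Cy = Cy * ι k ∧ Cy * ι k ∈ Set.range ((↑) : A → 𝓜(ℂ, A))) ∧
      (∀ p q : ℕ, Cy * ι (mu.u p q) = ((gel mu ι p q y : A) : 𝓜(ℂ, A))) := by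
  classical
  set L : A → A := fun x => limUnder atTop (fun n => cseq mu ι y n * x) with hLdef
  have hL : ∀ x : A, Tendsto (fun n => cseq mu ι y n * x) atTop (𝓝 (L x)) :=
    fun x => (cauchy_left mu ι hι hy x).tendsto_limUnder
  set R : A → A := fun x => limUnder atTop (fun n => x * cseq mu ι y n) with hRdef
  have hR : ∀ x : A, Tendsto (fun n => x * cseq mu ι y n) atTop (𝓝 (R x)) :=
    fun x => (cauchy_right mu ι hι hy x).tendsto_limUnder
  have hLadd : ∀ x x', L (x + x') = L x + L x' := fun x x' =>
    tendsto_nhds_unique (hL (x + x'))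
      (Tendsto.congr (fun n => (mul_add _ _ _).symm) ((hL x).add (hL x')))
  have hLsmul : ∀ (c : ℂ) (x : A), L (c • x) = c • L x := fun c x =>
    tendsto_nhds_unique (hL (c • x))
      (Tendsto.congr (fun n => (mul_smul_comm _ _ _).symm) ((hL x).const_smul c))
  have hRadd : ∀ x x', R (x + x') = R x + R x' := fun x x' =>
    tendsto_nhds_unique (hR (x + x'))
      (Tendsto.congr (fun n => (add_mul _ _ _).symm) ((hR x).add (hR x')))
  have hRsmul : ∀ (c : ℂ) (x : A), R (c • x) = c • R x := fun c x =>
    tendsto_nhds_unique (hR (c • x))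
      (Tendsto.congr (fun n => (smul_mul_assoc _ _ _).symm) ((hR x).const_smul c))
  have hLbound : ∀ x, ‖L x‖ ≤ ‖y‖ * ‖x‖ := fun x =>
    le_of_tendsto (hL x).norm (Filter.Eventually.of_forall fun n =>
      (norm_mul_le _ _).trans
        (mul_le_mul_of_nonneg_right (norm_cseq_le mu ι hy n) (norm_nonneg _)))
  have hRbound : ∀ x, ‖R x‖ ≤ ‖y‖ * ‖x‖ := fun x =>
    le_of_tendsto (hR x).norm (Filter.Eventually.of_forall fun n => by
      calc ‖x * cseq mu ι y n‖ ≤ ‖x‖ * ‖cseq mu ι y n‖ := norm_mul_le _ _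
        _ ≤ ‖x‖ * ‖y‖ := mul_le_mul_of_nonneg_left (norm_cseq_le mu ι hy n) (norm_nonneg _)
        _ = ‖y‖ * ‖x‖ := mul_comm _ _)
  have hcentral : ∀ x x' : A, R x * x' = x * L x' := fun x x' =>
    tendsto_nhds_unique
      (Tendsto.congr (fun n => (mul_assoc _ _ _)) ((hR x).mul_const x'))
      (tendsto_const_nhds.mul (hL x'))
  let Lc : A →L[ℂ] A := LinearMap.mkContinuous
    { toFun := L, map_add' := hLadd, map_smul' := hLsmul } ‖y‖ hLbound
  let Rc : A →L[ℂ] A := LinearMap.mkContinuous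
    { toFun := R, map_add' := hRadd, map_smul' := hRsmul } ‖y‖ hRbound
  set Cy : 𝓜(ℂ, A) := { toProd := (Lc, Rc), central := hcentral } with hCydef
  have hCy_coe : ∀ x : A, Cy * (x : 𝓜(ℂ, A)) = ((L x : A) : 𝓜(ℂ, A)) := fun x =>
    mul_coe Cy x
  have hgel : ∀ p q : ℕ, Cy * ι (mu.u p q) = ((gel mu ι p q y : A) : 𝓜(ℂ, A)) := by
    intro p q
    apply ext_right
    intro x
    have hx' : ι (mu.u p q) * (x : 𝓜(ℂ, A)) = (((ι (mu.u p q)).fst x : A) : 𝓜(ℂ, A)) :=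
      mul_coe _ _
    rw [mul_assoc, hx', hCy_coe]
    have heval : L ((ι (mu.u p q)).fst x) = gel mu ι p q y * x := by
      refine tendsto_nhds_unique (hL _) (tendsto_const_nhds.congr' ?_)
      filter_upwards [eventually_ge_atTop p] with n hn
      apply coe_injective
      rw [coe_mul_coe, coe_mul_coe, ← hx', coe_gel, ← mul_assoc, cseq_mul_e, if_pos hn]
    rw [heval, coe_mul_coe, coe_gel, mul_assoc]
  have hgel' : ∀ p q : ℕ, ι (mu.u p q) * Cy = ((gel mu ι p q y : A) : 𝓜(ℂ, A)) := by
    intro p q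
    apply ext_right
    intro x
    rw [mul_assoc, hCy_coe]
    have h1 : Tendsto (fun n => ι (mu.u p q) * ((cseq mu ι y n * x : A) : 𝓜(ℂ, A)))
        atTop (𝓝 (ι (mu.u p q) * ((L x : A) : 𝓜(ℂ, A)))) :=
      tendsto_const_nhds.mul ((continuous_coe.tendsto _).comp (hL x))
    have h2 : Tendsto (fun n => ι (mu.u p q) * ((cseq mu ι y n * x : A) : 𝓜(ℂ, A)))
        atTop (𝓝 (((gel mu ι p q y : A) : 𝓜(ℂ, A)) * (x : 𝓜(ℂ, A)))) := by
      refine tendsto_const_nhds.congr' ?_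
      filter_upwards [eventually_ge_atTop q] with n hn
      rw [coe_mul_coe, ← mul_assoc, e_mul_cseq, if_pos hn, coe_gel]
    rw [tendsto_nhds_unique h1 h2, coe_gel, mul_assoc]
  have hcomm : ∀ k : K, ι k * Cy = Cy * ι k := by
    have hclosed : IsClosed {k : K | ι k * Cy = Cy * ι k} := by
      have hcont : Continuous fun k : K => ι k * Cy - Cy * ι k :=
        ((iota_cont ι).mul continuous_const).sub (continuous_const.mul (iota_cont ι))
      have hset : {k : K | ι k * Cy = Cy * ι k}
          = (fun k => ι k * Cy - Cy * ι k) ⁻¹' {0} := by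
        ext k; simp [sub_eq_zero]
      rw [hset]
      exact IsClosed.preimage hcont isClosed_singleton
    have hsub : (Submodule.span ℂ (Set.range fun p : ℕ × ℕ => mu.u p.1 p.2) : Set K)
        ⊆ {k : K | ι k * Cy = Cy * ι k} := by
      intro s hs
      induction hs using Submodule.span_induction with
      | mem z hz =>
        obtain ⟨⟨i, j⟩, rfl⟩ := hz
        show ι (mu.u i j) * Cy = Cy * ι (mu.u i j)
        rw [hgel' i j, hgel i j]
      | zero => simp
      | add a b _ _ ha hb =>
        show ι (a + b) * Cy = Cy * ι (a + b)
        rw [map_add, add_mul, mul_add, ha, hb]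
      | smul c a _ ha =>
        show ι (c • a) * Cy = Cy * ι (c • a)
        rw [map_smul, smul_mul_assoc, mul_smul_comm, ha]
    intro k
    have hcl : closure (Submodule.span ℂ (Set.range fun p : ℕ × ℕ => mu.u p.1 p.2) : Set K)
        ⊆ {k : K | ι k * Cy = Cy * ι k} := closure_minimal hsub hclosed
    exact hcl (by rw [mu.dense_span.closure_eq]; trivial)
  have hmem : ∀ k : K, Cy * ι k ∈ Set.range ((↑) : A → 𝓜(ℂ, A)) := by
    have hclosed : IsClosed {k : K | Cy * ι k ∈ Set.range ((↑) : A → 𝓜(ℂ, A))} := by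
      have hrange : IsClosed (Set.range ((↑) : A → 𝓜(ℂ, A))) :=
        (isometry_coe (A := A)).isClosedEmbedding.isClosed_range
      exact IsClosed.preimage (continuous_const.mul (iota_cont ι)) hrange
    have hsub : (Submodule.span ℂ (Set.range fun p : ℕ × ℕ => mu.u p.1 p.2) : Set K)
        ⊆ {k : K | Cy * ι k ∈ Set.range ((↑) : A → 𝓜(ℂ, A))} := by
      intro s hs
      induction hs using Submodule.span_induction with
      | mem z hz =>
        obtain ⟨⟨i, j⟩, rfl⟩ := hz
        exact ⟨gel mu ι i j y, (hgel i j).symm⟩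
      | zero =>
        exact ⟨0, by rw [coe_zero', map_zero, mul_zero]⟩
      | add a b _ _ ha hb =>
        obtain ⟨u1, hu1⟩ := ha
        obtain ⟨u2, hu2⟩ := hb
        refine ⟨u1 + u2, ?_⟩
        show ((u1 + u2 : A) : 𝓜(ℂ, A)) = Cy * ι (a + b)
        rw [coe_add', map_add, mul_add, hu1, hu2]
      | smul c a _ ha =>
        obtain ⟨u1, hu1⟩ := ha
        refine ⟨c • u1, ?_⟩
        show ((c • u1 : A) : 𝓜(ℂ, A)) = Cy * ι (c • a)
        rw [coe_smul', map_smul, mul_smul_comm, hu1]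
    intro k
    have hcl := closure_minimal hsub hclosed
    exact hcl (by rw [mu.dense_span.closure_eq]; trivial)
  exact ⟨Cy, fun k => ⟨hcomm k, hmem k⟩, hgel⟩

end Construction


lemma coe_compress (w : A) :
    (((ι (mu.u 0 0)).fst ((ι (mu.u 0 0)).snd w) : A) : 𝓜(ℂ, A))
      = ι (mu.u 0 0) * (w : 𝓜(ℂ, A)) * ι (mu.u 0 0) := by
  rw [← mul_coe, ← coe_mul', mul_assoc]

lemma compress_isComp (w : A) :
    IsComp mu ι ((ι (mu.u 0 0)).fst ((ι (mu.u 0 0)).snd w)) := by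
  show (((ι (mu.u 0 0)).fst ((ι (mu.u 0 0)).snd w) : A) : 𝓜(ℂ, A))
      = ι (mu.u 0 0) * (((ι (mu.u 0 0)).fst ((ι (mu.u 0 0)).snd w) : A) : 𝓜(ℂ, A)) * ι (mu.u 0 0)
  rw [coe_compress]
  have h1 : ι (mu.u 0 0) * (ι (mu.u 0 0) * (w : 𝓜(ℂ, A)) * ι (mu.u 0 0))
      = ι (mu.u 0 0) * (w : 𝓜(ℂ, A)) * ι (mu.u 0 0) := by
    rw [← mul_assoc, ← mul_assoc, e_mul]
    simp
  have h2 : (ι (mu.u 0 0) * (w : 𝓜(ℂ, A)) * ι (mu.u 0 0)) * ι (mu.u 0 0)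
      = ι (mu.u 0 0) * (w : 𝓜(ℂ, A)) * ι (mu.u 0 0) := by
    rw [mul_assoc (ι (mu.u 0 0) * (w : 𝓜(ℂ, A))), e_mul]
    simp
  rw [h1, h2]


section Approx
variable {A : Type*} [NonUnitalCStarAlgebra A]
lemma exists_approx_unit (v : A) {ε : ℝ} (hε : 0 < ε) : ∃ u : A, ‖v - u * v‖ < ε := by
  classical
  set δ : ℝ := ε ^ 4 with hδdef
  have hδ : 0 < δ := by positivity
  set z : A := v * star v with hzdef
  have hz : IsSelfAdjoint z := IsSelfAdjoint.mul_star_self v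
  set f : ℝ → ℝ := fun t => t ^ 2 / (t ^ 2 + δ) with hfdef
  have hden : ∀ t : ℝ, 0 < t ^ 2 + δ := fun t => by positivity
  have hfc : Continuous f := by
    refine Continuous.div (by fun_prop) (by fun_prop) fun t => (hden t).ne'
  have hf0 : f 0 = 0 := by simp [hfdef]
  set u : A := cfcₙ f z with hudef
  have hu : IsSelfAdjoint u := cfcₙ_predicate f z
  set g : ℝ → ℝ := fun t => t - f t * t - t * f t + f t * t * f t with hgdef
  have hgc : Continuous g := by fun_prop
  have hg0 : g 0 = 0 := by simp [hgdef, hf0]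
  -- identify the product with cfcₙ g z
  have h1 : cfcₙ (fun t => f t * t) z = u * z := by
    rw [cfcₙ_mul f (fun t : ℝ => t) z (hfc.continuousOn) hf0 (by fun_prop) rfl,
      cfcₙ_id' ℝ z]
  have h2 : cfcₙ (fun t => t * f t) z = z * u := by
    rw [cfcₙ_mul (fun t : ℝ => t) f z (by fun_prop) rfl (hfc.continuousOn) hf0,
      cfcₙ_id' ℝ z]
  have h3 : cfcₙ (fun t => f t * t * f t) z = u * z * u := by
    rw [cfcₙ_mul (fun t => f t * t) f z (by fun_prop) (by simp [hf0]) (hfc.continuousOn) hf0,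
      h1]
  have hkey : cfcₙ g z = z - u * z - z * u + u * z * u := by
    rw [hgdef]
    rw [cfcₙ_add (fun t => t - f t * t - t * f t) (fun t => f t * t * f t) z
      (by fun_prop) (by simp [hf0]) (by fun_prop) (by simp [hf0])]
    rw [cfcₙ_sub (fun t => t - f t * t) (fun t => t * f t) z
      (by fun_prop) (by simp [hf0]) (by fun_prop) (by simp [hf0])]
    rw [cfcₙ_sub (fun t : ℝ => t) (fun t => f t * t) z
      (by fun_prop) rfl (by fun_prop) (by simp [hf0])]
    rw [cfcₙ_id' ℝ z, h1, h2, h3]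
  have hexpand : (v - u * v) * star (v - u * v) = z - u * z - z * u + u * z * u := by
    rw [star_sub, star_mul, hu.star_eq, hzdef]
    noncomm_ring
  -- norm bound on g over the quasispectrum
  have hb : ∀ t : ℝ, ‖g t‖ ≤ ε ^ 2 / 2 := by
    intro t
    have hgt : g t = t * δ ^ 2 / (t ^ 2 + δ) ^ 2 := by
      rw [hgdef, hfdef]
      field_simp
      ring
    rw [hgt, Real.norm_eq_abs, abs_div, abs_of_pos (by positivity : (0:ℝ) < (t ^ 2 + δ) ^ 2),
      div_le_iff₀ (by positivity : (0:ℝ) < (t ^ 2 + δ) ^ 2), abs_mul,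
      abs_of_nonneg (by positivity : (0:ℝ) ≤ δ ^ 2)]
    set s : ℝ := |t| with hsdef
    have hs0 : 0 ≤ s := abs_nonneg t
    have hst : t ^ 2 = s ^ 2 := (sq_abs t).symm
    rw [hst, hδdef]
    have hA : 2 * s * ε ^ 2 ≤ s ^ 2 + ε ^ 4 := by nlinarith [sq_nonneg (s - ε ^ 2)]
    have hB : ε ^ 4 ≤ s ^ 2 + ε ^ 4 := by nlinarith [sq_nonneg s]
    have h3' : 2 * s * ε ^ 2 * ε ^ 4 ≤ (s ^ 2 + ε ^ 4) ^ 2 := by nlinarith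
    have h4 := mul_le_mul_of_nonneg_left h3' (by positivity : (0:ℝ) ≤ ε ^ 2 / 2)
    nlinarith [h4]
  have hcfc : ‖cfcₙ g z‖ ≤ ε ^ 2 / 2 := norm_cfcₙ_le fun t _ => hb t
  refine ⟨u, ?_⟩
  have hnorm : ‖v - u * v‖ * ‖v - u * v‖ = ‖(v - u * v) * star (v - u * v)‖ :=
    (CStarRing.norm_self_mul_star).symm
  rw [hexpand, ← hkey] at hnorm
  nlinarith [norm_nonneg (v - u * v), hε, hnorm, hcfc]


end Approx

end Aux

/-- If `(A, ι)` is a `𝒦`-algebra, then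
`M(C(A, ι)) = {a ∈ M(A) : ι(k)·a = a·ι(k) for all k ∈ 𝒦}`.  Since `C(A, ι)` is a
nondegenerate C⋆-subalgebra of `M(A)`, the canonical copy of its multiplier algebra
`M(C(A, ι))` inside `M(A)` is the idealizer
`{a ∈ M(A) : a·C(A, ι) ⊆ C(A, ι) and C(A, ι)·a ⊆ C(A, ι)}`, which is how the left-hand
side is rendered here. -/
theorem multiplier_relComm_eq_commutant
    {K A : Type*} [NonUnitalCStarAlgebra K] [NonUnitalCStarAlgebra A]
    (hK : IsCompactOperatorsAlgebra K)
    (ι : K →⋆ₙₐ[ℂ] 𝓜(ℂ, A)) (hι : Nondegenerate ι) :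
    {a : 𝓜(ℂ, A) | ∀ c ∈ relComm ι, a * c ∈ relComm ι ∧ c * a ∈ relComm ι} =
      {a : 𝓜(ℂ, A) | ∀ k : K, ι k * a = a * ι k} := by
  classical
  obtain ⟨mu⟩ := hK
  ext a
  simp only [Set.mem_setOf_eq]
  constructor
  · -- hard direction
    intro h k
    set D : 𝓜(ℂ, A) := ι k * a - a * ι k with hDdef
    -- Step 1: D annihilates the relative commutant
    have hD : ∀ c ∈ relComm ι, D * c = 0 := by
      intro c hc
      have h1 : ι k * (a * c) = (a * c) * ι k := ((h c hc).1 k).1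
      have h2 : ι k * c = c * ι k := (hc k).1
      rw [hDdef, sub_mul]
      calc ι k * a * c - a * ι k * c
          = ι k * (a * c) - a * (ι k * c) := by rw [mul_assoc, mul_assoc]
        _ = (a * c) * ι k - a * (c * ι k) := by rw [h1, h2]
        _ = 0 := by rw [← mul_assoc, sub_self]
    -- Step 2: D annihilates e_{p0} y e_{0q} for compressed y
    have hstep2 : ∀ y : A, Aux.IsComp mu ι y → ∀ p q : ℕ,
        D * (ι (mu.u p 0) * (y : 𝓜(ℂ, A)) * ι (mu.u 0 q)) = 0 := by
      intro y hy p q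
      obtain ⟨Cy, hCy1, hCy2⟩ := Aux.exists_multiplier mu ι hι hy
      have hCmem : Cy ∈ relComm ι := fun k' => hCy1 k'
      have h0 : D * Cy = 0 := hD Cy hCmem
      calc D * (ι (mu.u p 0) * (y : 𝓜(ℂ, A)) * ι (mu.u 0 q))
          = D * ((Aux.gel mu ι p q y : A) : 𝓜(ℂ, A)) := by rw [Aux.coe_gel]
        _ = D * (Cy * ι (mu.u p q)) := by rw [hCy2]
        _ = (D * Cy) * ι (mu.u p q) := (mul_assoc _ _ _).symm
        _ = 0 := by rw [h0, zero_mul]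
    -- Step 3: D annihilates ι(u p q) * b for all p q and b : A
    have hstep3 : ∀ (p q : ℕ) (b : A), D * (ι (mu.u p q) * (b : 𝓜(ℂ, A))) = 0 := by
      intro p q b
      set v : A := (ι (mu.u 0 q)).fst b with hvdef
      have hv : ((v : A) : 𝓜(ℂ, A)) = ι (mu.u 0 q) * (b : 𝓜(ℂ, A)) :=
        (Aux.mul_coe _ _).symm
      have hv0 : ι (mu.u 0 0) * ((v : A) : 𝓜(ℂ, A)) = ((v : A) : 𝓜(ℂ, A)) := by
        rw [hv, ← mul_assoc, Aux.e_mul]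
        simp
      have hsplit : ι (mu.u p q) * (b : 𝓜(ℂ, A)) = ι (mu.u p 0) * ((v : A) : 𝓜(ℂ, A)) := by
        rw [hv, ← mul_assoc, Aux.e_mul]
        simp
      rw [hsplit]
      have happrox : ∀ w : A, D * (ι (mu.u p 0) * ((w * v : A) : 𝓜(ℂ, A))) = 0 := by
        intro w
        set y : A := (ι (mu.u 0 0)).fst ((ι (mu.u 0 0)).snd w) with hydef
        have hy_coe : ((y : A) : 𝓜(ℂ, A)) = ι (mu.u 0 0) * (w : 𝓜(ℂ, A)) * ι (mu.u 0 0) :=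
          Aux.coe_compress mu ι w
        have hy : Aux.IsComp mu ι y := Aux.compress_isComp mu ι w
        have h20 := hstep2 y hy p 0
        have h21 : D * (ι (mu.u p 0) * ((y : A) : 𝓜(ℂ, A)) * ι (mu.u 0 0))
            * ((v : A) : 𝓜(ℂ, A)) = 0 := by
          rw [h20, zero_mul]
        have hyv : ((y : A) : 𝓜(ℂ, A)) * ((v : A) : 𝓜(ℂ, A))
            = ι (mu.u 0 0) * ((w : 𝓜(ℂ, A)) * ((v : A) : 𝓜(ℂ, A))) := by
          rw [hy_coe, mul_assoc (ι (mu.u 0 0) * (w : 𝓜(ℂ, A))), hv0, mul_assoc]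
        have h22 : (ι (mu.u p 0) * ((y : A) : 𝓜(ℂ, A)) * ι (mu.u 0 0))
            * ((v : A) : 𝓜(ℂ, A)) = ι (mu.u p 0) * ((w * v : A) : 𝓜(ℂ, A)) := by
          rw [Aux.coe_mul_coe]
          rw [mul_assoc (ι (mu.u p 0) * ((y : A) : 𝓜(ℂ, A))), hv0]
          rw [mul_assoc (ι (mu.u p 0)), hyv, ← mul_assoc, Aux.e_mul]
          simp
        rw [← h22, ← mul_assoc]
        exact h21
      -- approximate v by w * v
      have hC : (0 : ℝ) < ‖D * ι (mu.u p 0)‖ + 1 := by positivity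
      have hub : ∀ ε : ℝ, 0 < ε →
          ‖D * (ι (mu.u p 0) * ((v : A) : 𝓜(ℂ, A)))‖ ≤ (‖D * ι (mu.u p 0)‖ + 1) * ε := by
        intro ε hε
        obtain ⟨w, hw⟩ := Aux.exists_approx_unit v hε
        have hzero : D * ι (mu.u p 0) * ((w * v : A) : 𝓜(ℂ, A)) = 0 := by
          rw [mul_assoc]
          exact happrox w
        have h1 : D * (ι (mu.u p 0) * ((v : A) : 𝓜(ℂ, A)))
            = D * ι (mu.u p 0) * (((v : A) : 𝓜(ℂ, A)) - ((w * v : A) : 𝓜(ℂ, A))) := by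
          rw [mul_sub, hzero, sub_zero, mul_assoc]
        rw [h1]
        have h2 : ‖(((v : A) : 𝓜(ℂ, A)) - ((w * v : A) : 𝓜(ℂ, A)))‖ = ‖v - w * v‖ := by
          rw [← Aux.coe_sub', Aux.norm_coe]
        calc ‖D * ι (mu.u p 0) * (((v : A) : 𝓜(ℂ, A)) - ((w * v : A) : 𝓜(ℂ, A)))‖
            ≤ ‖D * ι (mu.u p 0)‖ * ‖(((v : A) : 𝓜(ℂ, A)) - ((w * v : A) : 𝓜(ℂ, A)))‖ :=
              norm_mul_le _ _
          _ ≤ (‖D * ι (mu.u p 0)‖ + 1) * ε := by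
              rw [h2]
              have hD0 : (0 : ℝ) ≤ ‖D * ι (mu.u p 0)‖ := norm_nonneg _
              have hn0 : (0 : ℝ) ≤ ‖v - w * v‖ := norm_nonneg _
              nlinarith
      by_contra hne
      have hpos : 0 < ‖D * (ι (mu.u p 0) * ((v : A) : 𝓜(ℂ, A)))‖ :=
        lt_of_le_of_ne (norm_nonneg _) (Ne.symm (norm_ne_zero_iff.mpr hne))
      set x := ‖D * (ι (mu.u p 0) * ((v : A) : 𝓜(ℂ, A)))‖ with hxdef
      have hub' := hub (x / (2 * (‖D * ι (mu.u p 0)‖ + 1))) (by positivity)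
      have heq : (‖D * ι (mu.u p 0)‖ + 1) * (x / (2 * (‖D * ι (mu.u p 0)‖ + 1))) = x / 2 := by
        field_simp
      rw [heq] at hub'
      linarith
    -- Step 4: D annihilates all of A
    have hstep4 : ∀ b : A, D * (b : 𝓜(ℂ, A)) = 0 := by
      -- first, D * (ι k' * b) = 0 for every k' : K
      have hK' : ∀ (k' : K) (b : A), D * (ι k' * (b : 𝓜(ℂ, A))) = 0 := by
        intro k' b
        have hclosed : IsClosed {k' : K | D * (ι k' * (b : 𝓜(ℂ, A))) = 0} := by
          have hcont : Continuous fun k' : K => D * (ι k' * (b : 𝓜(ℂ, A))) :=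
            continuous_const.mul ((Aux.iota_cont ι).mul continuous_const)
          have hset : {k' : K | D * (ι k' * (b : 𝓜(ℂ, A))) = 0}
              = (fun k' : K => D * (ι k' * (b : 𝓜(ℂ, A)))) ⁻¹' {0} := rfl
          rw [hset]
          exact IsClosed.preimage hcont isClosed_singleton
        have hsub : (Submodule.span ℂ (Set.range fun p : ℕ × ℕ => mu.u p.1 p.2) : Set K)
            ⊆ {k' : K | D * (ι k' * (b : 𝓜(ℂ, A))) = 0} := by
          intro s hs
          induction hs using Submodule.span_induction with
          | mem z hz =>
            obtain ⟨⟨i, j⟩, rfl⟩ := hz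
            exact hstep3 i j b
          | zero => simp
          | add s t _ _ hs ht =>
            show D * (ι (s + t) * (b : 𝓜(ℂ, A))) = 0
            rw [map_add, add_mul, mul_add, hs, ht, add_zero]
          | smul c s _ hs =>
            show D * (ι (c • s) * (b : 𝓜(ℂ, A))) = 0
            rw [map_smul, smul_mul_assoc, mul_smul_comm, hs, smul_zero]
        have hcl := closure_minimal hsub hclosed
        exact hcl (by rw [mu.dense_span.closure_eq]; trivial)
      intro b
      have hclosed : IsClosed {m : 𝓜(ℂ, A) | D * m = 0} := by
        have hset : {m : 𝓜(ℂ, A) | D * m = 0} = (fun m : 𝓜(ℂ, A) => D * m) ⁻¹' {0} := rfl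
        rw [hset]
        exact IsClosed.preimage (continuous_const.mul continuous_id) isClosed_singleton
      have hsub : (Submodule.span ℂ
            {x : 𝓜(ℂ, A) | ∃ (a' : K) (c : A), x = ι a' * c} : Set 𝓜(ℂ, A))
          ⊆ {m : 𝓜(ℂ, A) | D * m = 0} := by
        intro s hs
        induction hs using Submodule.span_induction with
        | mem z hz =>
          obtain ⟨k', c, rfl⟩ := hz
          exact hK' k' c
        | zero => simp
        | add s t _ _ hs ht =>
          show D * (s + t) = 0
          rw [mul_add, hs, ht, add_zero]
        | smul c s _ hs =>
          show D * (c • s) = 0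
          rw [mul_smul_comm, hs, smul_zero]
      have hcl := closure_minimal hsub hclosed
      exact hcl (hι b)
    have hD0 : D = 0 := Aux.eq_zero_of_forall_coe hstep4
    exact sub_eq_zero.mp hD0
  · -- easy direction
    intro ha c hc
    constructor
    · intro k
      refine ⟨?_, ?_⟩
      · rw [← mul_assoc, ha k, mul_assoc, (hc k).1, ← mul_assoc]
      · obtain ⟨w, hw⟩ := (hc k).2
        rw [mul_assoc, ← hw, Aux.mul_coe]
        exact ⟨_, rfl⟩
    · intro k
      refine ⟨?_, ?_⟩
      · rw [← mul_assoc, (hc k).1, mul_assoc, ha k, ← mul_assoc]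
      · obtain ⟨w, hw⟩ := (hc k).2
        rw [mul_assoc, ← ha k, ← mul_assoc, ← hw, Aux.coe_mul']
        exact ⟨_, rfl⟩
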